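/- Coherence (every preferred extension is set-stable) is an implicative property for frameworks with at least 4 assumptions: with base rules R = {contrary(C) ← A, D ← A}, witness rules R_1 = {contrary(B) ← C}, R_2 = {contrary(A) ← B}, R_3 = {contrary(C) ← D}, the framework with rule set R ∪ S has all preferred extensions set-stable for every S ⊆ {R_1, R_2, R_3} except S = {R_1, R_2}, where the unique preferred extension {D} is not set-stable. -/
import Mathlib


/-- A Bipolar ABA rule `head ← body` (body is a single assumption). -/
structure ABARule (S : Type) where
  head : S
  body : S

/-- `Derives R a b`: there is a deduction (chain of rules in `R`) from `a` to `b`. -/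
def Derives {S : Type} (R : Set (ABARule S)) : S → S → Prop :=
  Relation.ReflTransGen fun a b => (⟨b, a⟩ : ABARule S) ∈ R

/-- `Δ` attacks `β` iff the contrary of `β` is deducible from some member of `Δ`. -/
def Attacks {S : Type} (co : S → S) (R : Set (ABARule S)) (Delta : Set S) (b : S) : Prop :=
  ∃ a ∈ Delta, Derives R a (co b)

/-- `Δ` attacks set `B` iff it attacks some member of `B`. -/
def AttacksSet {S : Type} (co : S → S) (R : Set (ABARule S)) (Delta B : Set S) : Prop :=
  ∃ b ∈ B, Attacks co R Delta b

/-- `Δ` is conflict-free iff it does not attack itself. -/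
def ConflictFree {S : Type} (co : S → S) (R : Set (ABARule S)) (Delta : Set S) : Prop :=
  ¬ AttacksSet co R Delta Delta

/-- Deductive closure of `Δ` within the assumptions `asm`. -/
def Cl {S : Type} (asm : Set S) (R : Set (ABARule S)) (Delta : Set S) : Set S :=
  {a | a ∈ asm ∧ ∃ d ∈ Delta, Derives R d a}

/-- `Δ` is closed iff `Δ = Cl(Δ)`. -/
def BABAClosed {S : Type} (asm : Set S) (R : Set (ABARule S)) (Delta : Set S) : Prop :=
  Cl asm R Delta = Delta

/-- Admissibility: closed, conflict-free, and counter-attacks every closed attacker. -/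
def Admissible {S : Type} (asm : Set S) (co : S → S) (R : Set (ABARule S))
    (Delta : Set S) : Prop :=
  Delta ⊆ asm ∧ BABAClosed asm R Delta ∧ ConflictFree co R Delta ∧
    ∀ B ⊆ asm, BABAClosed asm R B → AttacksSet co R B Delta → AttacksSet co R Delta B

/-- Preferred: ⊆-maximally admissible. -/
def Preferred {S : Type} (asm : Set S) (co : S → S) (R : Set (ABARule S))
    (Delta : Set S) : Prop :=
  Admissible asm co R Delta ∧
    ∀ D', Admissible asm co R D' → Delta ⊆ D' → D' = Delta

/-- `Δ` defends `α` iff `Δ` attacks every closed set attacking `α`. -/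
def Defends {S : Type} (asm : Set S) (co : S → S) (R : Set (ABARule S))
    (Delta : Set S) (a : S) : Prop :=
  ∀ B ⊆ asm, BABAClosed asm R B → Attacks co R B a → AttacksSet co R Delta B

/-- Complete: admissible and containing exactly the assumptions it defends. -/
def CompleteExt {S : Type} (asm : Set S) (co : S → S) (R : Set (ABARule S))
    (Delta : Set S) : Prop :=
  Admissible asm co R Delta ∧ Delta = {a | a ∈ asm ∧ Defends asm co R Delta a}

/-- Set-stable: closed, conflict-free, attacking `Cl({β})` for every `β` outside. -/
def SetStable {S : Type} (asm : Set S) (co : S → S) (R : Set (ABARule S))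
    (Delta : Set S) : Prop :=
  Delta ⊆ asm ∧ BABAClosed asm R Delta ∧ ConflictFree co R Delta ∧
    ∀ b ∈ asm, b ∉ Delta → AttacksSet co R Delta (Cl asm R {b})

/-- Well-founded extension: the intersection of all complete extensions. -/
def WellFoundedExt {S : Type} (asm : Set S) (co : S → S) (R : Set (ABARule S))
    (Delta : Set S) : Prop :=
  Delta = ⋂₀ {B | CompleteExt asm co R B}

/-- Ideal: ⊆-maximal among admissible sets contained in all preferred extensions. -/
def IdealExt {S : Type} (asm : Set S) (co : S → S) (R : Set (ABARule S))
    (Delta : Set S) : Prop :=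
  (Admissible asm co R Delta ∧ ∀ B, Preferred asm co R B → Delta ⊆ B) ∧
    ∀ D', (Admissible asm co R D' ∧ ∀ B, Preferred asm co R B → D' ⊆ B) →
      Delta ⊆ D' → D' = Delta

/-- Quota rule: keep the rules accepted by at least `q` agents. -/
def QuotaAgg {S : Type} {n : ℕ} (Rs : Fin n → Set (ABARule S)) (q : ℕ) :
    Set (ABARule S) :=
  {r | ∃ N' : Finset (Fin n), q ≤ N'.card ∧ ∀ i ∈ N', r ∈ Rs i}

/-- Oligarchic rule: keep the rules accepted by all veto agents. -/
def OligAgg {S : Type} {n : ℕ} (Rs : Fin n → Set (ABARule S)) (Nv : Set (Fin n)) :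
    Set (ABARule S) :=
  {r | ∀ j ∈ Nv, r ∈ Rs j}

abbrev Sen4 := Fin 4 ⊕ Fin 4

def cmap4 : Sen4 → Sen4
  | .inl i => .inr i
  | .inr i => .inr i

def asm4 : Set Sen4 := Set.range Sum.inl

def R18 : Set (ABARule Sen4) := {⟨.inr 2, .inl 0⟩, ⟨.inl 3, .inl 0⟩}

def r18a : ABARule Sen4 := ⟨.inr 1, .inl 2⟩
def r18b : ABARule Sen4 := ⟨.inr 0, .inl 1⟩
def r18c : ABARule Sen4 := ⟨.inr 2, .inl 3⟩


section CoherenceHelpers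

open Relation Sum

private lemma fin4_cases : ∀ i : Fin 4, i = 0 ∨ i = 1 ∨ i = 2 ∨ i = 3 := by decide

private lemma derives_inv {S : Type} {R : Set (ABARule S)} {P : Set S}
    (h : ∀ a ∈ P, ∀ b, (⟨b, a⟩ : ABARule S) ∈ R → b ∈ P)
    {x y : S} (hxy : Derives R x y) (hx : x ∈ P) : y ∈ P := by
  induction hxy with
  | refl => exact hx
  | tail _ hstep ih => exact h _ ih _ hstep

private lemma mem_R {T : Set (ABARule Sen4)} (hT : T ⊆ {r18a, r18b, r18c})
    {b a : Sen4} (h : (⟨b, a⟩ : ABARule Sen4) ∈ R18 ∪ T) :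
    (b = Sum.inr 2 ∧ a = Sum.inl 0) ∨ (b = Sum.inl 3 ∧ a = Sum.inl 0) ∨
    (b = Sum.inr 1 ∧ a = Sum.inl 2 ∧ r18a ∈ T) ∨
    (b = Sum.inr 0 ∧ a = Sum.inl 1 ∧ r18b ∈ T) ∨
    (b = Sum.inr 2 ∧ a = Sum.inl 3 ∧ r18c ∈ T) := by
  rcases h with h | h
  · simp only [R18, Set.mem_insert_iff, Set.mem_singleton_iff, ABARule.mk.injEq] at h
    tauto
  · have h2 := hT h
    simp only [Set.mem_insert_iff, Set.mem_singleton_iff] at h2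
    rcases h2 with h2 | h2 | h2
    · have := h2 ▸ h
      simp only [r18a, ABARule.mk.injEq] at h2
      exact Or.inr (Or.inr (Or.inl ⟨h2.1, h2.2, this⟩))
    · have := h2 ▸ h
      simp only [r18b, ABARule.mk.injEq] at h2
      exact Or.inr (Or.inr (Or.inr (Or.inl ⟨h2.1, h2.2, this⟩)))
    · have := h2 ▸ h
      simp only [r18c, ABARule.mk.injEq] at h2
      exact Or.inr (Or.inr (Or.inr (Or.inr ⟨h2.1, h2.2, this⟩)))

private lemma der_from_A {T : Set (ABARule Sen4)} (hT : T ⊆ {r18a, r18b, r18c})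
    {y : Sen4} (h : Derives (R18 ∪ T) (Sum.inl 0) y) :
    y = Sum.inl 0 ∨ y = Sum.inr 2 ∨ y = Sum.inl 3 := by
  refine derives_inv (P := {z | z = Sum.inl 0 ∨ z = Sum.inr 2 ∨ z = Sum.inl 3}) ?_ h (by left; rfl)
  intro a ha b hb
  rcases mem_R hT hb with ⟨rfl, rfl⟩ | ⟨rfl, rfl⟩ | ⟨rfl, rfl, -⟩ | ⟨rfl, rfl, -⟩ | ⟨rfl, rfl, -⟩ <;>
    simp_all [Set.mem_setOf_eq]

private lemma der_from_B {T : Set (ABARule Sen4)} (hT : T ⊆ {r18a, r18b, r18c})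
    {y : Sen4} (h : Derives (R18 ∪ T) (Sum.inl 1) y) :
    y = Sum.inl 1 ∨ (y = Sum.inr 0 ∧ r18b ∈ T) := by
  refine derives_inv (P := {z | z = Sum.inl 1 ∨ (z = Sum.inr 0 ∧ r18b ∈ T)}) ?_ h (by left; rfl)
  intro a ha b hb
  rcases mem_R hT hb with ⟨rfl, rfl⟩ | ⟨rfl, rfl⟩ | ⟨rfl, rfl, ht⟩ | ⟨rfl, rfl, ht⟩ | ⟨rfl, rfl, ht⟩ <;>
    simp_all [Set.mem_setOf_eq]

private lemma der_from_C {T : Set (ABARule Sen4)} (hT : T ⊆ {r18a, r18b, r18c})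
    {y : Sen4} (h : Derives (R18 ∪ T) (Sum.inl 2) y) :
    y = Sum.inl 2 ∨ (y = Sum.inr 1 ∧ r18a ∈ T) := by
  refine derives_inv (P := {z | z = Sum.inl 2 ∨ (z = Sum.inr 1 ∧ r18a ∈ T)}) ?_ h (by left; rfl)
  intro a ha b hb
  rcases mem_R hT hb with ⟨rfl, rfl⟩ | ⟨rfl, rfl⟩ | ⟨rfl, rfl, ht⟩ | ⟨rfl, rfl, ht⟩ | ⟨rfl, rfl, ht⟩ <;>
    simp_all [Set.mem_setOf_eq]

private lemma der_from_D {T : Set (ABARule Sen4)} (hT : T ⊆ {r18a, r18b, r18c})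
    {y : Sen4} (h : Derives (R18 ∪ T) (Sum.inl 3) y) :
    y = Sum.inl 3 ∨ (y = Sum.inr 2 ∧ r18c ∈ T) := by
  refine derives_inv (P := {z | z = Sum.inl 3 ∨ (z = Sum.inr 2 ∧ r18c ∈ T)}) ?_ h (by left; rfl)
  intro a ha b hb
  rcases mem_R hT hb with ⟨rfl, rfl⟩ | ⟨rfl, rfl⟩ | ⟨rfl, rfl, ht⟩ | ⟨rfl, rfl, ht⟩ | ⟨rfl, rfl, ht⟩ <;>
    simp_all [Set.mem_setOf_eq]

private lemma der_AC (T : Set (ABARule Sen4)) :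
    Derives (R18 ∪ T) (Sum.inl 0) (Sum.inr 2) :=
  Relation.ReflTransGen.single (Or.inl (by simp [R18]))

private lemma der_AD (T : Set (ABARule Sen4)) :
    Derives (R18 ∪ T) (Sum.inl 0) (Sum.inl 3) :=
  Relation.ReflTransGen.single (Or.inl (by simp [R18]))

private lemma der_CB {T : Set (ABARule Sen4)} (ht : r18a ∈ T) :
    Derives (R18 ∪ T) (Sum.inl 2) (Sum.inr 1) :=
  Relation.ReflTransGen.single (Or.inr ht)

private lemma der_BA {T : Set (ABARule Sen4)} (ht : r18b ∈ T) :
    Derives (R18 ∪ T) (Sum.inl 1) (Sum.inr 0) :=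
  Relation.ReflTransGen.single (Or.inr ht)

private lemma der_DC {T : Set (ABARule Sen4)} (ht : r18c ∈ T) :
    Derives (R18 ∪ T) (Sum.inl 3) (Sum.inr 2) :=
  Relation.ReflTransGen.single (Or.inr ht)

/-- inversion of attacks on A -/
private lemma att_A {T Δ} (hT : T ⊆ {r18a, r18b, r18c}) (hΔ : Δ ⊆ asm4)
    (h : Attacks cmap4 (R18 ∪ T) Δ (Sum.inl 0)) : Sum.inl 1 ∈ Δ ∧ r18b ∈ T := by
  obtain ⟨d, hd, hder⟩ := h
  obtain ⟨i, rfl⟩ := hΔ hd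
  have hco : cmap4 (Sum.inl 0) = Sum.inr 0 := rfl
  rw [hco] at hder
  rcases fin4_cases i with rfl | rfl | rfl | rfl
  · rcases der_from_A hT hder with h | h | h <;> exact absurd h (by decide)
  · rcases der_from_B hT hder with h | ⟨h, ht⟩
    · exact absurd h (by decide)
    · exact ⟨hd, ht⟩
  · rcases der_from_C hT hder with h | ⟨h, ht⟩ <;> exact absurd h (by decide)
  · rcases der_from_D hT hder with h | ⟨h, ht⟩ <;> exact absurd h (by decide)

private lemma att_B {T Δ} (hT : T ⊆ {r18a, r18b, r18c}) (hΔ : Δ ⊆ asm4)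
    (h : Attacks cmap4 (R18 ∪ T) Δ (Sum.inl 1)) : Sum.inl 2 ∈ Δ ∧ r18a ∈ T := by
  obtain ⟨d, hd, hder⟩ := h
  obtain ⟨i, rfl⟩ := hΔ hd
  have hco : cmap4 (Sum.inl 1) = Sum.inr 1 := rfl
  rw [hco] at hder
  rcases fin4_cases i with rfl | rfl | rfl | rfl
  · rcases der_from_A hT hder with h | h | h <;> exact absurd h (by decide)
  · rcases der_from_B hT hder with h | ⟨h, ht⟩ <;> exact absurd h (by decide)
  · rcases der_from_C hT hder with h | ⟨h, ht⟩
    · exact absurd h (by decide)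
    · exact ⟨hd, ht⟩
  · rcases der_from_D hT hder with h | ⟨h, ht⟩ <;> exact absurd h (by decide)

private lemma att_C {T Δ} (hT : T ⊆ {r18a, r18b, r18c}) (hΔ : Δ ⊆ asm4)
    (h : Attacks cmap4 (R18 ∪ T) Δ (Sum.inl 2)) :
    Sum.inl 0 ∈ Δ ∨ (Sum.inl 3 ∈ Δ ∧ r18c ∈ T) := by
  obtain ⟨d, hd, hder⟩ := h
  obtain ⟨i, rfl⟩ := hΔ hd
  have hco : cmap4 (Sum.inl 2) = Sum.inr 2 := rfl
  rw [hco] at hder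
  rcases fin4_cases i with rfl | rfl | rfl | rfl
  · exact Or.inl hd
  · rcases der_from_B hT hder with h | ⟨h, ht⟩ <;> exact absurd h (by decide)
  · rcases der_from_C hT hder with h | ⟨h, ht⟩ <;> exact absurd h (by decide)
  · rcases der_from_D hT hder with h | ⟨h, ht⟩
    · exact absurd h (by decide)
    · exact Or.inr ⟨hd, ht⟩

private lemma att_D {T Δ} (hT : T ⊆ {r18a, r18b, r18c}) (hΔ : Δ ⊆ asm4)
    (h : Attacks cmap4 (R18 ∪ T) Δ (Sum.inl 3)) : False := by
  obtain ⟨d, hd, hder⟩ := h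
  obtain ⟨i, rfl⟩ := hΔ hd
  have hco : cmap4 (Sum.inl 3) = Sum.inr 3 := rfl
  rw [hco] at hder
  rcases fin4_cases i with rfl | rfl | rfl | rfl
  · rcases der_from_A hT hder with h | h | h <;> exact absurd h (by decide)
  · rcases der_from_B hT hder with h | ⟨h, ht⟩ <;> exact absurd h (by decide)
  · rcases der_from_C hT hder with h | ⟨h, ht⟩ <;> exact absurd h (by decide)
  · rcases der_from_D hT hder with h | ⟨h, ht⟩ <;> exact absurd h (by decide)

/-- a subset of asm4 closed under A→D is closed -/
private lemma closed_of {T Δ} (hT : T ⊆ {r18a, r18b, r18c}) (hΔ : Δ ⊆ asm4)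
    (hAD : Sum.inl 0 ∈ Δ → Sum.inl 3 ∈ Δ) : BABAClosed asm4 (R18 ∪ T) Δ := by
  apply Set.Subset.antisymm
  · rintro x ⟨hxasm, d, hd, hder⟩
    obtain ⟨i, rfl⟩ := hΔ hd
    obtain ⟨j, rfl⟩ := hxasm
    rcases fin4_cases i with rfl | rfl | rfl | rfl
    · rcases der_from_A hT hder with h | h | h
      · exact h ▸ hd
      · exact absurd h (by simp)
      · exact h ▸ hAD hd
    · rcases der_from_B hT hder with h | ⟨h, -⟩
      · exact h ▸ hd
      · exact absurd h (by simp)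
    · rcases der_from_C hT hder with h | ⟨h, -⟩
      · exact h ▸ hd
      · exact absurd h (by simp)
    · rcases der_from_D hT hder with h | ⟨h, -⟩
      · exact h ▸ hd
      · exact absurd h (by simp)
  · intro x hx
    exact ⟨hΔ hx, x, hx, Relation.ReflTransGen.refl⟩

private lemma not_A_mem {T Δ} (hT : T ⊆ {r18a, r18b, r18c}) (hb : r18b ∈ T)
    (hadm : Admissible asm4 cmap4 (R18 ∪ T) Δ) : Sum.inl 0 ∉ Δ := by
  intro hA
  obtain ⟨hΔa, hcl, hcf, hdef⟩ := hadm
  have hBsub : ({Sum.inl 1} : Set Sen4) ⊆ asm4 := by rintro x rfl; exact ⟨1, rfl⟩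
  have hBcl : BABAClosed asm4 (R18 ∪ T) {Sum.inl 1} :=
    closed_of hT hBsub (by intro h; exact absurd h (by decide))
  have hattack : AttacksSet cmap4 (R18 ∪ T) {Sum.inl 1} Δ :=
    ⟨Sum.inl 0, hA, Sum.inl 1, rfl, der_BA hb⟩
  obtain ⟨b, hbB, hatt⟩ := hdef {Sum.inl 1} hBsub hBcl hattack
  rcases hbB with rfl
  obtain ⟨hC, -⟩ := att_B hT hΔa hatt
  exact hcf ⟨Sum.inl 2, hC, Sum.inl 0, hA, der_AC T⟩

private lemma not_C_mem' {T Δ} (hT : T ⊆ {r18a, r18b, r18c}) (hc : r18c ∈ T)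
    (hadm : Admissible asm4 cmap4 (R18 ∪ T) Δ) : Sum.inl 2 ∉ Δ := by
  intro hC
  obtain ⟨hΔa, hcl, hcf, hdef⟩ := hadm
  have hBsub : ({Sum.inl 3} : Set Sen4) ⊆ asm4 := by rintro x rfl; exact ⟨3, rfl⟩
  have hBcl : BABAClosed asm4 (R18 ∪ T) {Sum.inl 3} :=
    closed_of hT hBsub (by intro h; exact absurd h (by decide))
  have hattack : AttacksSet cmap4 (R18 ∪ T) {Sum.inl 3} Δ :=
    ⟨Sum.inl 2, hC, Sum.inl 3, rfl, der_DC hc⟩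
  obtain ⟨b, hbB, hatt⟩ := hdef {Sum.inl 3} hBsub hBcl hattack
  rcases hbB with rfl
  exact att_D hT hΔa hatt

private lemma not_C_gen {T Δ} (hT : T ⊆ {r18a, r18b, r18c})
    (h : r18b ∈ T → Sum.inl 1 ∉ Δ)
    (hadm : Admissible asm4 cmap4 (R18 ∪ T) Δ) : Sum.inl 2 ∉ Δ := by
  intro hC
  obtain ⟨hΔa, hcl, hcf, hdef⟩ := hadm
  have hBsub : ({Sum.inl 0, Sum.inl 3} : Set Sen4) ⊆ asm4 := by
    rintro x (rfl | rfl); exacts [⟨0, rfl⟩, ⟨3, rfl⟩]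
  have hBcl : BABAClosed asm4 (R18 ∪ T) {Sum.inl 0, Sum.inl 3} :=
    closed_of hT hBsub (fun _ => Or.inr rfl)
  have hattack : AttacksSet cmap4 (R18 ∪ T) {Sum.inl 0, Sum.inl 3} Δ :=
    ⟨Sum.inl 2, hC, Sum.inl 0, Or.inl rfl, der_AC T⟩
  obtain ⟨b, hbB, hatt⟩ := hdef _ hBsub hBcl hattack
  rcases hbB with rfl | rfl
  · obtain ⟨hB1, hbT⟩ := att_A hT hΔa hatt
    exact h hbT hB1
  · exact att_D hT hΔa hatt

private lemma not_B_mem_ab {T Δ} (hT : T ⊆ {r18a, r18b, r18c}) (ha : r18a ∈ T)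
    (hc : r18c ∉ T) (hA : Sum.inl 0 ∉ Δ)
    (hadm : Admissible asm4 cmap4 (R18 ∪ T) Δ) : Sum.inl 1 ∉ Δ := by
  intro hB
  obtain ⟨hΔa, hcl, hcf, hdef⟩ := hadm
  have hBsub : ({Sum.inl 2} : Set Sen4) ⊆ asm4 := by rintro x rfl; exact ⟨2, rfl⟩
  have hBcl : BABAClosed asm4 (R18 ∪ T) {Sum.inl 2} :=
    closed_of hT hBsub (by intro h; exact absurd h (by decide))
  have hattack : AttacksSet cmap4 (R18 ∪ T) {Sum.inl 2} Δ :=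
    ⟨Sum.inl 1, hB, Sum.inl 2, rfl, der_CB ha⟩
  obtain ⟨b, hbB, hatt⟩ := hdef {Sum.inl 2} hBsub hBcl hattack
  rcases hbB with rfl
  rcases att_C hT hΔa hatt with h | ⟨-, h⟩
  · exact hA h
  · exact hc h

private lemma E1sub : ({Sum.inl 0, Sum.inl 1, Sum.inl 3} : Set Sen4) ⊆ asm4 := by
  rintro x hx
  simp only [Set.mem_insert_iff, Set.mem_singleton_iff] at hx
  rcases hx with rfl | rfl | rfl
  exacts [⟨0, rfl⟩, ⟨1, rfl⟩, ⟨3, rfl⟩]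

private lemma E2sub : ({Sum.inl 1, Sum.inl 2, Sum.inl 3} : Set Sen4) ⊆ asm4 := by
  rintro x hx
  simp only [Set.mem_insert_iff, Set.mem_singleton_iff] at hx
  rcases hx with rfl | rfl | rfl
  exacts [⟨1, rfl⟩, ⟨2, rfl⟩, ⟨3, rfl⟩]

private lemma E3sub : ({Sum.inl 1, Sum.inl 3} : Set Sen4) ⊆ asm4 := by
  rintro x hx
  simp only [Set.mem_insert_iff, Set.mem_singleton_iff] at hx
  rcases hx with rfl | rfl
  exacts [⟨1, rfl⟩, ⟨3, rfl⟩]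

private lemma E4sub : ({Sum.inl 3} : Set Sen4) ⊆ asm4 := by
  rintro x hx
  rw [Set.mem_singleton_iff] at hx
  subst hx; exact ⟨3, rfl⟩

private lemma adm_E1 {T} (hT : T ⊆ {r18a, r18b, r18c}) (hb : r18b ∉ T) :
    Admissible asm4 cmap4 (R18 ∪ T) {Sum.inl 0, Sum.inl 1, Sum.inl 3} := by
  refine ⟨E1sub, closed_of hT E1sub (fun _ => by right; right; rfl), ?_, ?_⟩
  · rintro ⟨b, hmem, hatt⟩
    simp only [Set.mem_insert_iff, Set.mem_singleton_iff] at hmem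
    rcases hmem with rfl | rfl | rfl
    · exact hb (att_A hT E1sub hatt).2
    · exact absurd (att_B hT E1sub hatt).1 (by simp)
    · exact att_D hT E1sub hatt
  · rintro B hBsub hBcl ⟨b, hmem, hatt⟩
    simp only [Set.mem_insert_iff, Set.mem_singleton_iff] at hmem
    rcases hmem with rfl | rfl | rfl
    · exact absurd (att_A hT hBsub hatt).2 hb
    · exact ⟨Sum.inl 2, (att_B hT hBsub hatt).1, Sum.inl 0, by simp, der_AC T⟩
    · exact (att_D hT hBsub hatt).elim

private lemma adm_E2 {T} (hT : T ⊆ {r18a, r18b, r18c}) (ha : r18a ∉ T)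
    (hb : r18b ∈ T) (hc : r18c ∉ T) :
    Admissible asm4 cmap4 (R18 ∪ T) {Sum.inl 1, Sum.inl 2, Sum.inl 3} := by
  refine ⟨E2sub, closed_of hT E2sub (fun h => absurd h (by simp)), ?_, ?_⟩
  · rintro ⟨b, hmem, hatt⟩
    simp only [Set.mem_insert_iff, Set.mem_singleton_iff] at hmem
    rcases hmem with rfl | rfl | rfl
    · exact ha (att_B hT E2sub hatt).2
    · rcases att_C hT E2sub hatt with h | ⟨-, h⟩
      · exact absurd h (by simp)
      · exact hc h
    · exact att_D hT E2sub hatt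
  · rintro B hBsub hBcl ⟨b, hmem, hatt⟩
    simp only [Set.mem_insert_iff, Set.mem_singleton_iff] at hmem
    rcases hmem with rfl | rfl | rfl
    · exact absurd (att_B hT hBsub hatt).2 ha
    · rcases att_C hT hBsub hatt with h | ⟨-, h⟩
      · exact ⟨Sum.inl 0, h, Sum.inl 1, by simp, der_BA hb⟩
      · exact absurd h hc
    · exact (att_D hT hBsub hatt).elim

private lemma adm_E3 {T} (hT : T ⊆ {r18a, r18b, r18c}) (hc : r18c ∈ T) :
    Admissible asm4 cmap4 (R18 ∪ T) {Sum.inl 1, Sum.inl 3} := by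
  refine ⟨E3sub, closed_of hT E3sub (fun h => absurd h (by simp)), ?_, ?_⟩
  · rintro ⟨b, hmem, hatt⟩
    simp only [Set.mem_insert_iff, Set.mem_singleton_iff] at hmem
    rcases hmem with rfl | rfl
    · exact absurd (att_B hT E3sub hatt).1 (by simp)
    · exact att_D hT E3sub hatt
  · rintro B hBsub hBcl ⟨b, hmem, hatt⟩
    simp only [Set.mem_insert_iff, Set.mem_singleton_iff] at hmem
    rcases hmem with rfl | rfl
    · exact ⟨Sum.inl 2, (att_B hT hBsub hatt).1, Sum.inl 3, by simp, der_DC hc⟩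
    · exact (att_D hT hBsub hatt).elim

private lemma adm_E4 {T} (hT : T ⊆ {r18a, r18b, r18c}) :
    Admissible asm4 cmap4 (R18 ∪ T) {Sum.inl 3} := by
  refine ⟨E4sub, closed_of hT E4sub (fun h => absurd h (by simp)), ?_, ?_⟩
  · rintro ⟨b, hmem, hatt⟩
    rw [Set.mem_singleton_iff] at hmem
    subst hmem
    exact att_D hT E4sub hatt
  · rintro B hBsub hBcl ⟨b, hmem, hatt⟩
    rw [Set.mem_singleton_iff] at hmem
    subst hmem
    exact (att_D hT hBsub hatt).elim

private lemma sub_E1 {T Δ} (hT : T ⊆ {r18a, r18b, r18c}) (hb : r18b ∉ T)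
    (hadm : Admissible asm4 cmap4 (R18 ∪ T) Δ) :
    Δ ⊆ {Sum.inl 0, Sum.inl 1, Sum.inl 3} := by
  intro x hx
  obtain ⟨i, rfl⟩ := hadm.1 hx
  rcases fin4_cases i with rfl | rfl | rfl | rfl
  · simp
  · simp
  · exact absurd hx (not_C_gen hT (fun hbt => absurd hbt hb) hadm)
  · simp

private lemma sub_E2 {T Δ} (hT : T ⊆ {r18a, r18b, r18c}) (hb : r18b ∈ T)
    (hadm : Admissible asm4 cmap4 (R18 ∪ T) Δ) :
    Δ ⊆ {Sum.inl 1, Sum.inl 2, Sum.inl 3} := by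
  intro x hx
  obtain ⟨i, rfl⟩ := hadm.1 hx
  rcases fin4_cases i with rfl | rfl | rfl | rfl
  · exact absurd hx (not_A_mem hT hb hadm)
  · simp
  · simp
  · simp

private lemma sub_E3 {T Δ} (hT : T ⊆ {r18a, r18b, r18c}) (hb : r18b ∈ T)
    (hc : r18c ∈ T) (hadm : Admissible asm4 cmap4 (R18 ∪ T) Δ) :
    Δ ⊆ {Sum.inl 1, Sum.inl 3} := by
  intro x hx
  obtain ⟨i, rfl⟩ := hadm.1 hx
  rcases fin4_cases i with rfl | rfl | rfl | rfl
  · exact absurd hx (not_A_mem hT hb hadm)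
  · simp
  · exact absurd hx (not_C_mem' hT hc hadm)
  · simp

private lemma sub_E4 {T Δ} (hT : T ⊆ {r18a, r18b, r18c}) (ha : r18a ∈ T)
    (hb : r18b ∈ T) (hc : r18c ∉ T)
    (hadm : Admissible asm4 cmap4 (R18 ∪ T) Δ) :
    Δ ⊆ {Sum.inl 3} := by
  have hA : Sum.inl 0 ∉ Δ := not_A_mem hT hb hadm
  have hB : Sum.inl 1 ∉ Δ := not_B_mem_ab hT ha hc hA hadm
  have hC : Sum.inl 2 ∉ Δ := not_C_gen hT (fun _ => hB) hadm
  intro x hx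
  obtain ⟨i, rfl⟩ := hadm.1 hx
  rcases fin4_cases i with rfl | rfl | rfl | rfl
  · exact absurd hx hA
  · exact absurd hx hB
  · exact absurd hx hC
  · rfl

private lemma self_mem_cl {T} (i : Fin 4) :
    Sum.inl i ∈ Cl asm4 (R18 ∪ T) {Sum.inl i} :=
  ⟨⟨i, rfl⟩, Sum.inl i, rfl, Relation.ReflTransGen.refl⟩

private lemma ss_E1 {T} (hT : T ⊆ {r18a, r18b, r18c}) (hb : r18b ∉ T) :
    SetStable asm4 cmap4 (R18 ∪ T) {Sum.inl 0, Sum.inl 1, Sum.inl 3} := by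
  obtain ⟨h1, h2, h3, -⟩ := adm_E1 hT hb
  refine ⟨h1, h2, h3, ?_⟩
  rintro b ⟨i, rfl⟩ hnb
  rcases fin4_cases i with rfl | rfl | rfl | rfl
  · exact absurd (by simp) hnb
  · exact absurd (by simp) hnb
  · exact ⟨Sum.inl 2, self_mem_cl 2, Sum.inl 0, by simp, der_AC T⟩
  · exact absurd (by simp) hnb

private lemma ss_E2 {T} (hT : T ⊆ {r18a, r18b, r18c}) (ha : r18a ∉ T)
    (hb : r18b ∈ T) (hc : r18c ∉ T) :
    SetStable asm4 cmap4 (R18 ∪ T) {Sum.inl 1, Sum.inl 2, Sum.inl 3} := by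
  obtain ⟨h1, h2, h3, -⟩ := adm_E2 hT ha hb hc
  refine ⟨h1, h2, h3, ?_⟩
  rintro b ⟨i, rfl⟩ hnb
  rcases fin4_cases i with rfl | rfl | rfl | rfl
  · exact ⟨Sum.inl 0, self_mem_cl 0, Sum.inl 1, by simp, der_BA hb⟩
  · exact absurd (by simp) hnb
  · exact absurd (by simp) hnb
  · exact absurd (by simp) hnb

private lemma ss_E3 {T} (hT : T ⊆ {r18a, r18b, r18c}) (hb : r18b ∈ T)
    (hc : r18c ∈ T) :
    SetStable asm4 cmap4 (R18 ∪ T) {Sum.inl 1, Sum.inl 3} := by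
  obtain ⟨h1, h2, h3, -⟩ := adm_E3 hT hc
  refine ⟨h1, h2, h3, ?_⟩
  rintro b ⟨i, rfl⟩ hnb
  rcases fin4_cases i with rfl | rfl | rfl | rfl
  · exact ⟨Sum.inl 0, self_mem_cl 0, Sum.inl 1, by simp, der_BA hb⟩
  · exact absurd (by simp) hnb
  · exact ⟨Sum.inl 2, self_mem_cl 2, Sum.inl 3, by simp, der_DC hc⟩
  · exact absurd (by simp) hnb

private lemma coherent_case {T E} (hE : Admissible asm4 cmap4 (R18 ∪ T) E)
    (hsub : ∀ Δ, Admissible asm4 cmap4 (R18 ∪ T) Δ → Δ ⊆ E)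
    (hss : SetStable asm4 cmap4 (R18 ∪ T) E) :
    ∀ Delta, Preferred asm4 cmap4 (R18 ∪ T) Delta →
      SetStable asm4 cmap4 (R18 ∪ T) Delta := by
  intro Δ hpref
  have hEq : E = Δ := hpref.2 E hE (hsub Δ hpref.1)
  rw [← hEq]
  exact hss

end CoherenceHelpers

theorem coherence_implicative :
    ∀ T ⊆ ({r18a, r18b, r18c} : Set (ABARule Sen4)),
      (T ≠ {r18a, r18b} →
        ∀ Delta, Preferred asm4 cmap4 (R18 ∪ T) Delta →
          SetStable asm4 cmap4 (R18 ∪ T) Delta) ∧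
      (T = {r18a, r18b} →
        Preferred asm4 cmap4 (R18 ∪ T) {Sum.inl 3} ∧
        (∀ Delta, Preferred asm4 cmap4 (R18 ∪ T) Delta → Delta = {Sum.inl 3}) ∧
        ¬ SetStable asm4 cmap4 (R18 ∪ T) {Sum.inl 3}) := by
  intro T hT
  by_cases ha : r18a ∈ T <;> by_cases hb : r18b ∈ T <;> by_cases hc : r18c ∈ T
  -- (a,b,c) = (T,T,T)
  · refine ⟨fun _ => coherent_case (adm_E3 hT hc) (fun Δ hΔ => sub_E3 hT hb hc hΔ)
      (ss_E3 hT hb hc), fun heq => ?_⟩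
    rw [heq] at hc
    rcases hc with h | h <;> simp [r18a, r18b, r18c] at h
  -- (T,T,F) : the incoherent case
  · have hTeq : T = {r18a, r18b} := by
      apply Set.Subset.antisymm
      · intro x hx
        have h2 := hT hx
        simp only [Set.mem_insert_iff, Set.mem_singleton_iff] at h2 ⊢
        rcases h2 with h | h | h
        · exact Or.inl h
        · exact Or.inr h
        · exact absurd (h ▸ hx) hc
      · intro x hx
        simp only [Set.mem_insert_iff, Set.mem_singleton_iff] at hx
        rcases hx with rfl | rfl
        exacts [ha, hb]
    refine ⟨fun hne => absurd hTeq hne, fun _ => ?_⟩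
    have hadm4 := adm_E4 hT
    have hsubs : ∀ Δ, Admissible asm4 cmap4 (R18 ∪ T) Δ → Δ ⊆ {Sum.inl 3} :=
      fun Δ hΔ => sub_E4 hT ha hb hc hΔ
    refine ⟨⟨hadm4, fun D' hD' hsub' => Set.Subset.antisymm (hsubs D' hD') hsub'⟩,
      fun Δ hpref => (hpref.2 _ hadm4 (hsubs Δ hpref.1)).symm, ?_⟩
    rintro ⟨-, -, -, h4⟩
    obtain ⟨x, hxCl, d, hd, hder⟩ := h4 (Sum.inl 0) ⟨0, rfl⟩ (by simp)
    rw [Set.mem_singleton_iff] at hd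
    subst hd
    obtain ⟨⟨i, rfl⟩, -⟩ := hxCl
    have hco : cmap4 (Sum.inl i) = Sum.inr i := rfl
    rw [hco] at hder
    rcases der_from_D hT hder with h | ⟨-, hct⟩
    · exact absurd h (by simp)
    · exact hc hct
  -- (T,F,T)
  · refine ⟨fun _ => coherent_case (adm_E1 hT hb) (fun Δ hΔ => sub_E1 hT hb hΔ)
      (ss_E1 hT hb), fun heq => ?_⟩
    rw [heq] at hb
    exact (hb (Or.inr rfl)).elim
  -- (T,F,F)
  · refine ⟨fun _ => coherent_case (adm_E1 hT hb) (fun Δ hΔ => sub_E1 hT hb hΔ)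
      (ss_E1 hT hb), fun heq => ?_⟩
    rw [heq] at hb
    exact (hb (Or.inr rfl)).elim
  -- (F,T,T)
  · refine ⟨fun _ => coherent_case (adm_E3 hT hc) (fun Δ hΔ => sub_E3 hT hb hc hΔ)
      (ss_E3 hT hb hc), fun heq => ?_⟩
    rw [heq] at ha
    exact (ha (Or.inl rfl)).elim
  -- (F,T,F)
  · refine ⟨fun _ => coherent_case (adm_E2 hT ha hb hc) (fun Δ hΔ => sub_E2 hT hb hΔ)
      (ss_E2 hT ha hb hc), fun heq => ?_⟩
    rw [heq] at ha
    exact (ha (Or.inl rfl)).elim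
  -- (F,F,T)
  · refine ⟨fun _ => coherent_case (adm_E1 hT hb) (fun Δ hΔ => sub_E1 hT hb hΔ)
      (ss_E1 hT hb), fun heq => ?_⟩
    rw [heq] at ha
    exact (ha (Or.inl rfl)).elim
  -- (F,F,F)
  · refine ⟨fun _ => coherent_case (adm_E1 hT hb) (fun Δ hΔ => sub_E1 hT hb hΔ)
      (ss_E1 hT hb), fun heq => ?_⟩
    rw [heq] at ha
    exact (ha (Or.inl rfl)).elim
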